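/- Let G be a k-uniform hypergraph on n vertices without isolated vertices with maximum degree Δ and average 2-degrees m₁ ≥ … ≥ m_n. Then the signless Laplacian spectral radius satisfies μ(G) ≤ m₁^{1/k} m₂^{1−1/k} + Δ. -/

import Mathlib

/-- The spectral radius of an order-`k` tensor of dimension `n`: the largest modulus of its
(complex) eigenvalues, where `ρ` is an eigenvalue if `T x = ρ x^{[k-1]}` for some `x ≠ 0`. -/
noncomputable def specRad (n k : ℕ) (T : Fin n → (Fin (k-1) → Fin n) → ℝ) : ℝ :=
  sSup {r : ℝ | ∃ ρ : ℂ, ‖ρ‖ = r ∧ ∃ x : Fin n → ℂ, x ≠ 0 ∧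
    ∀ i, (∑ f : Fin (k-1) → Fin n, (T i f : ℂ) * ∏ a, x (f a)) = ρ * x i ^ (k-1)}

/-- A hypergraph on vertex set `Fin n` is a finite set of edges; `hDeg` is the degree of
vertex `i`, the number of edges containing `i`. -/
def hDeg (n : ℕ) (E : Finset (Finset (Fin n))) (i : Fin n) : ℕ :=
  (E.filter (fun e => i ∈ e)).card

/-- The average 2-degree of vertex `i` in a `k`-uniform hypergraph:
`m_i = (Σ_{{i,i₂,…,i_k} ∈ E_i} d_{i₂} ⋯ d_{i_k}) / d_i^{k-1}`. -/
noncomputable def avg2 (n k : ℕ) (E : Finset (Finset (Fin n))) (i : Fin n) : ℝ :=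
  (∑ e ∈ E.filter (fun e => i ∈ e), ∏ j ∈ e.erase i, (hDeg n E j : ℝ)) /
    (hDeg n E i : ℝ) ^ (k-1)

/-- The adjacency tensor of a `k`-uniform hypergraph: entry `1/(k-1)!` at `(i₁,…,i_k)` when
`{i₁,…,i_k}` is an edge, and `0` otherwise. -/
noncomputable def adjT (n k : ℕ) (E : Finset (Finset (Fin n))) :
    Fin n → (Fin (k-1) → Fin n) → ℝ :=
  fun i f => if insert i (Finset.image f Finset.univ) ∈ E then 1 / (k-1).factorial else 0

/-- The signless Laplacian tensor `Q(G) = D(G) + A(G)`. -/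
noncomputable def qT (n k : ℕ) (E : Finset (Finset (Fin n))) :
    Fin n → (Fin (k-1) → Fin n) → ℝ :=
  fun i f => (if ∀ a, f a = i then (hDeg n E i : ℝ) else 0) + adjT n k E i f

/-- A hypergraph is connected if every pair of distinct vertices is joined by a sequence of
pairwise intersecting edges. -/
def HConn (n : ℕ) (E : Finset (Finset (Fin n))) : Prop :=
  ∀ u v : Fin n, u ≠ v → ∃ r : ℕ, ∃ es : Fin (r+1) → Finset (Fin n),
    (∀ s, es s ∈ E) ∧ u ∈ es 0 ∧ v ∈ es (Fin.last r) ∧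
    ∀ s : Fin r, (es s.castSucc ∩ es s.succ).Nonempty

lemma adjT_nonneg (n k : ℕ) (E : Finset (Finset (Fin n))) (i : Fin n)
    (f : Fin (k-1) → Fin n) : 0 ≤ adjT n k E i f := by
  unfold adjT; split <;> positivity

lemma avg2_nonneg (n k : ℕ) (E : Finset (Finset (Fin n))) (i : Fin n) :
    0 ≤ avg2 n k E i := by
  unfold avg2
  apply div_nonneg _ (by positivity)
  exact Finset.sum_nonneg fun e _ => Finset.prod_nonneg fun j _ => by positivity

lemma adj_support {n k : ℕ} (hk : 2 ≤ k) {E : Finset (Finset (Fin n))}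
    (hcard : ∀ e ∈ E, e.card = k) {i : Fin n} {f : Fin (k-1) → Fin n}
    (h : insert i (Finset.image f Finset.univ) ∈ E) :
    Function.Injective f ∧ i ∉ Finset.image f Finset.univ ∧
      (Finset.image f Finset.univ).card = k - 1 := by
  classical
  have hle : (Finset.image f Finset.univ).card ≤ k - 1 := by
    calc (Finset.image f Finset.univ).card ≤ (Finset.univ : Finset (Fin (k-1))).card :=
          Finset.card_image_le
      _ = k - 1 := by simp
  have hc : (insert i (Finset.image f Finset.univ)).card = k := hcard _ h
  have hni : i ∉ Finset.image f Finset.univ := by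
    intro hi
    rw [Finset.insert_eq_self.2 hi] at hc
    omega
  have hcS : (Finset.image f Finset.univ).card = k - 1 := by
    rw [Finset.card_insert_of_notMem hni] at hc
    omega
  refine ⟨?_, hni, hcS⟩
  have hinj : Set.InjOn f ↑(Finset.univ : Finset (Fin (k-1))) := by
    apply Finset.card_image_iff.1
    rw [hcS]; simp
  intro a b hab
  exact hinj (by simp) (by simp) hab

lemma sum_adjT {n k : ℕ} (hk : 2 ≤ k) {E : Finset (Finset (Fin n))}
    (hcard : ∀ e ∈ E, e.card = k) (i : Fin n) (w : Fin n → ℝ) :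
    ∑ f : Fin (k-1) → Fin n, adjT n k E i f * ∏ a, w (f a)
      = ∑ e ∈ E.filter (fun e => i ∈ e), ∏ j ∈ e.erase i, w j := by
  classical
  have key : ∀ f : Fin (k-1) → Fin n, adjT n k E i f * ∏ a, w (f a)
      = if insert i (Finset.image f Finset.univ) ∈ E
        then (1/((k-1).factorial : ℝ)) * ∏ a, w (f a) else 0 := by
    intro f; unfold adjT; split <;> simp
  rw [Finset.sum_congr rfl (fun f _ => key f), ← Finset.sum_filter]
  rw [← Finset.sum_fiberwise_of_maps_to
      (g := fun f : Fin (k-1) → Fin n => insert i (Finset.image f Finset.univ))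
      (t := E.filter (fun e => i ∈ e))
      (fun f hf => by
        simp only [Finset.mem_filter, Finset.mem_univ, true_and] at hf ⊢
        exact ⟨hf, Finset.mem_insert_self _ _⟩)]
  refine Finset.sum_congr rfl (fun e he => ?_)
  simp only [Finset.mem_filter] at he
  obtain ⟨heE, hie⟩ := he
  -- characterize the fiber
  have hfib : ∀ f : Fin (k-1) → Fin n,
      (f ∈ (Finset.univ.filter (fun f : Fin (k-1) → Fin n =>
          insert i (Finset.image f Finset.univ) ∈ E)).filter
        (fun f => insert i (Finset.image f Finset.univ) = e))
      ↔ Finset.image f Finset.univ = e.erase i := by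
    intro f
    simp only [Finset.mem_filter, Finset.mem_univ, true_and]
    constructor
    · rintro ⟨hfE, hfe⟩
      obtain ⟨hinj, hni, hcS⟩ := adj_support hk hcard hfE
      rw [← hfe, Finset.erase_insert hni]
    · intro him
      have : insert i (Finset.image f Finset.univ) = e := by
        rw [him, Finset.insert_erase hie]
      exact ⟨this ▸ heE, this⟩
  have hset : (Finset.univ.filter (fun f : Fin (k-1) → Fin n =>
          insert i (Finset.image f Finset.univ) ∈ E)).filter
        (fun f => insert i (Finset.image f Finset.univ) = e)
      = Finset.univ.filter (fun f : Fin (k-1) → Fin n =>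
          Finset.image f Finset.univ = e.erase i) := by
    ext f
    rw [hfib f]
    simp
  rw [hset]
  -- every f in the set is injective and has the right product
  have hcek : (e.erase i).card = k - 1 := by
    rw [Finset.card_erase_of_mem hie, hcard e heE]
  have hinj : ∀ f : Fin (k-1) → Fin n, Finset.image f Finset.univ = e.erase i →
      Function.Injective f := by
    intro f him
    have : (Finset.image f Finset.univ).card = (Finset.univ : Finset (Fin (k-1))).card := by
      rw [him, hcek]; simp
    have hio := Finset.card_image_iff.1 this
    intro a b hab
    exact hio (by simp) (by simp) hab
  have hprod : ∀ f ∈ Finset.univ.filter (fun f : Fin (k-1) → Fin n =>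
        Finset.image f Finset.univ = e.erase i),
      (1/((k-1).factorial : ℝ)) * ∏ a, w (f a)
        = (1/((k-1).factorial : ℝ)) * ∏ j ∈ e.erase i, w j := by
    intro f hf
    simp only [Finset.mem_filter, Finset.mem_univ, true_and] at hf
    have := hinj f hf
    rw [← hf, Finset.prod_image (fun a _ b _ hab => this hab)]
  rw [Finset.sum_congr rfl hprod, Finset.sum_const]
  -- count the fiber
  have hcardfib : (Finset.univ.filter (fun f : Fin (k-1) → Fin n =>
      Finset.image f Finset.univ = e.erase i)).card = (k-1).factorial := by
    have hF : Function.Injective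
        (fun (g : Fin (k-1) ↪ {x // x ∈ e.erase i}) (a : Fin (k-1)) => (g a : Fin n)) := by
      intro g₁ g₂ hg
      ext a
      exact congrArg Fin.val (congrFun hg a)
    have hseteq : Finset.univ.filter (fun f : Fin (k-1) → Fin n =>
        Finset.image f Finset.univ = e.erase i)
        = Finset.univ.image
          (fun (g : Fin (k-1) ↪ {x // x ∈ e.erase i}) (a : Fin (k-1)) => (g a : Fin n)) := by
      ext f
      simp only [Finset.mem_filter, Finset.mem_univ, true_and, Finset.mem_image]
      constructor
      · intro him
        have hinjf := hinj f him
        refine ⟨⟨fun a => ⟨f a, him ▸ Finset.mem_image_of_mem f (Finset.mem_univ a)⟩,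
          fun a b h => hinjf (congrArg Subtype.val h)⟩, rfl⟩
      · rintro ⟨g, rfl⟩
        have hsub : Finset.image (fun a => (g a : Fin n)) Finset.univ ⊆ e.erase i := by
          intro x hx
          simp only [Finset.mem_image] at hx
          obtain ⟨a, _, rfl⟩ := hx
          exact (g a).2
        apply Finset.eq_of_subset_of_card_le hsub
        rw [Finset.card_image_of_injective _ (fun a b h => g.injective (Subtype.ext h))]
        rw [hcek]; simp
    rw [hseteq, Finset.card_image_of_injective _ hF, Finset.card_univ,
      Fintype.card_embedding_eq, Fintype.card_coe, hcek, Fintype.card_fin,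
      Nat.descFactorial_self]
  rw [hcardfib, nsmul_eq_mul, ← mul_assoc, mul_one_div,
    div_self (by positivity : ((k-1).factorial : ℝ) ≠ 0), one_mul]

/-- Let `G` be a `k`-uniform hypergraph on `n` vertices without isolated vertices with
maximum degree `Δ` and average 2-degrees `m₁ ≥ … ≥ m_n`. Then
`μ(G) ≤ m₁^{1/k} m₂^{1-1/k} + Δ`. -/
theorem stmt6 (n k : ℕ) (hk : 2 ≤ k) (hkn : k ≤ n)
    (E : Finset (Finset (Fin n))) (hcard : ∀ e ∈ E, e.card = k)
    (hiso : ∀ i : Fin n, 0 < hDeg n E i)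
    (hsort : ∀ i j : Fin n, i ≤ j → avg2 n k E j ≤ avg2 n k E i)
    (Δ : ℕ) (hΔmax : ∀ i : Fin n, hDeg n E i ≤ Δ) (hΔ : ∃ i : Fin n, hDeg n E i = Δ) :
    specRad n k (qT n k E) ≤
      (avg2 n k E ⟨0, by omega⟩) ^ ((1 : ℝ)/k) * (avg2 n k E ⟨1, by omega⟩) ^ (1 - (1 : ℝ)/k)
        + Δ := by
  classical
  have hn0 : 0 < n := by omega
  have hn1 : 1 < n := by omega
  set i0 : Fin n := ⟨0, hn0⟩ with hi0
  set i1 : Fin n := ⟨1, hn1⟩ with hi1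
  set M₁ : ℝ := avg2 n k E i0 with hM₁
  set M₂ : ℝ := avg2 n k E i1 with hM₂
  have hM₁nn : 0 ≤ M₁ := avg2_nonneg n k E i0
  have hM₂nn : 0 ≤ M₂ := avg2_nonneg n k E i1
  have hM21 : M₂ ≤ M₁ := hsort i0 i1 (by simp [hi0, hi1, Fin.le_def])
  have hkR : (0:ℝ) < k := by positivity
  set B : ℝ := M₁ ^ ((1 : ℝ)/k) * M₂ ^ (1 - (1 : ℝ)/k) with hB
  have hBnn : 0 ≤ B := mul_nonneg (Real.rpow_nonneg hM₁nn _) (Real.rpow_nonneg hM₂nn _)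
  -- key comparison : M₂ ≤ B  (used in the easy case)
  have hM₂B : M₂ ≤ B := by
    rcases eq_or_lt_of_le hM₂nn with h0 | h0
    · rw [← h0]; exact hBnn
    · have : M₂ = M₂ ^ ((1 : ℝ)/k) * M₂ ^ (1 - (1 : ℝ)/k) := by
        rw [← Real.rpow_add h0]
        norm_num
      rw [this, hB]
      exact mul_le_mul_of_nonneg_right
        (Real.rpow_le_rpow hM₂nn hM21 (by positivity)) (Real.rpow_nonneg hM₂nn _)
  -- key comparison : (M₁ * M₂ ^ (k-1)) ^ (1/k : ℝ) = B
  have hBeq : (M₁ * M₂ ^ (k-1)) ^ ((1 : ℝ)/k) = B := by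
    rw [Real.mul_rpow hM₁nn (by positivity), hB]
    congr 1
    rw [← Real.rpow_natCast M₂ (k-1), ← Real.rpow_mul hM₂nn]
    congr 1
    have : ((k - 1 : ℕ) : ℝ) = (k : ℝ) - 1 := by
      push_cast [Nat.cast_sub (by omega : 1 ≤ k)]; ring
    rw [this]
    field_simp
  apply Real.sSup_le _ (add_nonneg hBnn (Nat.cast_nonneg Δ))
  rintro r ⟨ρ, rfl, x, hx0, hx⟩
  set d : Fin n → ℝ := fun i => (hDeg n E i : ℝ) with hdDef
  have hd : ∀ i, 0 < d i := fun i => Nat.cast_pos.mpr (hiso i)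
  have hdΔ : ∀ i, d i ≤ (Δ : ℝ) := fun i => Nat.cast_le.mpr (hΔmax i)
  set z : Fin n → ℝ := fun i => ‖x i‖ / d i with hzDef
  have hznn : ∀ i, 0 ≤ z i := fun i => div_nonneg (norm_nonneg _) (hd i).le
  have hxz : ∀ i, ‖x i‖ = d i * z i := by
    intro i
    have hne := (hd i).ne'
    rw [hzDef]
    field_simp
  -- the adjacency part of the eigenvalue equation
  have hA : ∀ i, ∑ f : Fin (k-1) → Fin n, ((adjT n k E i f : ℝ) : ℂ) * ∏ a, x (f a)
      = (ρ - (hDeg n E i : ℂ)) * x i ^ (k-1) := by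
    intro i
    have hsplit : ∀ f : Fin (k-1) → Fin n,
        ((qT n k E i f : ℝ) : ℂ) * ∏ a, x (f a)
        = (if ∀ a, f a = i then ((hDeg n E i : ℝ) : ℂ) else 0) * ∏ a, x (f a)
          + ((adjT n k E i f : ℝ) : ℂ) * ∏ a, x (f a) := by
      intro f
      by_cases h : ∀ a, f a = i <;> simp [qT, h, add_mul]
    have hdiag : ∑ f : Fin (k-1) → Fin n,
        (if ∀ a, f a = i then ((hDeg n E i : ℝ) : ℂ) else 0) * ∏ a, x (f a)
        = (hDeg n E i : ℂ) * x i ^ (k-1) := by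
      have hthis : ∀ f : Fin (k-1) → Fin n,
          (if ∀ a, f a = i then ((hDeg n E i : ℝ) : ℂ) else 0) * ∏ a, x (f a)
          = if f = (fun _ => i) then ((hDeg n E i : ℝ) : ℂ) * ∏ a, x (f a) else 0 := by
        intro f
        by_cases h : f = (fun _ => i)
        · have : ∀ a, f a = i := fun a => by rw [h]
          simp [h, this]
        · have : ¬ (∀ a, f a = i) := fun hall => h (funext hall)
          simp [h, this]
      rw [Finset.sum_congr rfl (fun f _ => hthis f),
        Finset.sum_ite_eq' Finset.univ (fun _ => i)]
      simp [Finset.prod_const, Finset.card_univ]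
    have h := hx i
    rw [Finset.sum_congr rfl (fun f _ => hsplit f), Finset.sum_add_distrib, hdiag] at h
    push_cast
    push_cast at h
    linear_combination h
  -- the modulus inequality
  have habs : ∀ i, ‖ρ - (hDeg n E i : ℂ)‖ * (d i * z i) ^ (k-1)
      ≤ ∑ f : Fin (k-1) → Fin n, adjT n k E i f * ∏ a, ‖x (f a)‖ := by
    intro i
    have h1 : ‖ρ - (hDeg n E i : ℂ)‖ * (d i * z i) ^ (k-1)
        = ‖(ρ - (hDeg n E i : ℂ)) * x i ^ (k-1)‖ := by
      rw [norm_mul, norm_pow, hxz i]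
    rw [h1, ← hA i]
    refine le_trans (norm_sum_le _ _) ?_
    apply le_of_eq
    refine Finset.sum_congr rfl (fun f _ => ?_)
    rw [norm_mul, Complex.norm_real, Real.norm_of_nonneg (adjT_nonneg n k E i f), norm_prod]
  -- the edge-sum identity specialised to degrees
  have hAvg : ∀ i, ∑ f : Fin (k-1) → Fin n, adjT n k E i f * ∏ a, d (f a)
      = avg2 n k E i * d i ^ (k-1) := by
    intro i
    rw [sum_adjT hk hcard i d]
    unfold avg2
    rw [div_mul_cancel₀]
    exact pow_ne_zero _ (by exact_mod_cast (hiso i).ne')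
  -- choose the two largest entries of z
  obtain ⟨p, -, hp⟩ := Finset.exists_max_image Finset.univ z ⟨i0, Finset.mem_univ _⟩
  have hp' : ∀ j, z j ≤ z p := fun j => hp j (Finset.mem_univ _)
  have hne : (Finset.univ.erase p).Nonempty := by
    rw [← Finset.card_pos, Finset.card_erase_of_mem (Finset.mem_univ p), Finset.card_univ]
    simp; omega
  obtain ⟨q, hqmem, hq⟩ := Finset.exists_max_image (Finset.univ.erase p) z hne
  have hpq : q ≠ p := (Finset.mem_erase.1 hqmem).1
  have hq' : ∀ j, j ≠ p → z j ≤ z q := fun j hj =>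
    hq j (Finset.mem_erase.2 ⟨hj, Finset.mem_univ _⟩)
  have hzqp : z q ≤ z p := hp' q
  -- x p ≠ 0
  have hxp : z p ≠ 0 := by
    intro h0
    apply hx0
    funext j
    have : ‖x j‖ = 0 := by
      have := hxz j
      have h2 : z j = 0 := le_antisymm (h0 ▸ hp' j) (hznn j)
      rw [this, h2, mul_zero]
    simpa using this
  have hzp : 0 < z p := lt_of_le_of_ne (hznn p) (Ne.symm hxp)
  -- tuple-wise bound at p
  have hboundP : ∑ f : Fin (k-1) → Fin n, adjT n k E p f * ∏ a, ‖x (f a)‖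
      ≤ z q ^ (k-1) * (avg2 n k E p * d p ^ (k-1)) := by
    rw [← hAvg p, Finset.mul_sum]
    apply Finset.sum_le_sum
    intro f _
    by_cases hf : insert p (Finset.image f Finset.univ) ∈ E
    · obtain ⟨hinj, hnp, hcS⟩ := adj_support hk hcard hf
      have hfa : ∀ a, f a ≠ p := fun a ha =>
        hnp (ha ▸ Finset.mem_image_of_mem f (Finset.mem_univ a))
      have h1 : ∏ a, ‖x (f a)‖ ≤ ∏ a, (d (f a) * z q) := by
        apply Finset.prod_le_prod (fun a _ => norm_nonneg _)
        intro a _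
        rw [hxz (f a)]
        exact mul_le_mul_of_nonneg_left (hq' (f a) (hfa a)) (hd (f a)).le
      calc adjT n k E p f * ∏ a, ‖x (f a)‖
          ≤ adjT n k E p f * ∏ a, (d (f a) * z q) :=
            mul_le_mul_of_nonneg_left h1 (adjT_nonneg n k E p f)
        _ = z q ^ (k-1) * (adjT n k E p f * ∏ a, d (f a)) := by
            rw [Finset.prod_mul_distrib, Finset.prod_const, Finset.card_univ,
              Fintype.card_fin]
            ring
    · simp [adjT, hf]
  -- tuple-wise bound at q
  have hboundQ : ∑ f : Fin (k-1) → Fin n, adjT n k E q f * ∏ a, ‖x (f a)‖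
      ≤ (z p * z q ^ (k-2)) * (avg2 n k E q * d q ^ (k-1)) := by
    rw [← hAvg q, Finset.mul_sum]
    apply Finset.sum_le_sum
    intro f _
    by_cases hf : insert q (Finset.image f Finset.univ) ∈ E
    · obtain ⟨hinj, hnq, hcS⟩ := adj_support hk hcard hf
      have hzprod : ∏ a, z (f a) ≤ z p * z q ^ (k-2) := by
        have hip : ∏ a, z (f a) = ∏ j ∈ Finset.image f Finset.univ, z j := by
          rw [Finset.prod_image (fun a _ b _ hab => hinj hab)]
        rw [hip]
        by_cases hpS : p ∈ Finset.image f Finset.univ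
        · rw [← Finset.mul_prod_erase _ z hpS]
          apply mul_le_mul_of_nonneg_left _ (hznn p)
          calc ∏ j ∈ (Finset.image f Finset.univ).erase p, z j
              ≤ ∏ j ∈ (Finset.image f Finset.univ).erase p, z q := by
                apply Finset.prod_le_prod (fun j _ => hznn j)
                intro j hj
                exact hq' j (Finset.mem_erase.1 hj).1
            _ = z q ^ (k-2) := by
                rw [Finset.prod_const, Finset.card_erase_of_mem hpS, hcS,
                  show k - 1 - 1 = k - 2 from by omega]
        · have hstep : ∏ j ∈ Finset.image f Finset.univ, z j ≤ z q ^ (k-1) := by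
            calc ∏ j ∈ Finset.image f Finset.univ, z j
                ≤ ∏ j ∈ Finset.image f Finset.univ, z q := by
                  apply Finset.prod_le_prod (fun j _ => hznn j)
                  intro j hj
                  exact hq' j (fun h => hpS (h ▸ hj))
              _ = z q ^ (k-1) := by rw [Finset.prod_const, hcS]
          refine hstep.trans ?_
          have : z q ^ (k-1) = z q * z q ^ (k-2) := by
            rw [show k - 1 = (k-2) + 1 by omega, pow_succ]
            ring
          rw [this]
          exact mul_le_mul_of_nonneg_right hzqp (by positivity)
      have h1 : ∏ a, ‖x (f a)‖ ≤ (∏ a, d (f a)) * (z p * z q ^ (k-2)) := by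
        calc ∏ a, ‖x (f a)‖ = (∏ a, d (f a)) * ∏ a, z (f a) := by
              rw [← Finset.prod_mul_distrib]
              exact Finset.prod_congr rfl (fun a _ => hxz (f a))
          _ ≤ (∏ a, d (f a)) * (z p * z q ^ (k-2)) := by
              apply mul_le_mul_of_nonneg_left hzprod
              exact Finset.prod_nonneg (fun a _ => (hd (f a)).le)
      calc adjT n k E q f * ∏ a, ‖x (f a)‖
          ≤ adjT n k E q f * ((∏ a, d (f a)) * (z p * z q ^ (k-2))) :=
            mul_le_mul_of_nonneg_left h1 (adjT_nonneg n k E q f)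
        _ = (z p * z q ^ (k-2)) * (adjT n k E q f * ∏ a, d (f a)) := by ring
    · simp [adjT, hf]
  -- scalar inequalities
  set A : ℝ := ‖ρ - (hDeg n E p : ℂ)‖ with hAdef
  set C : ℝ := ‖ρ - (hDeg n E q : ℂ)‖ with hCdef
  have ineq1 : A * z p ^ (k-1) ≤ avg2 n k E p * z q ^ (k-1) := by
    have h1 := (habs p).trans hboundP
    have hdp : (0:ℝ) < d p ^ (k-1) := pow_pos (hd p) _
    rw [← mul_le_mul_iff_of_pos_right hdp]
    calc A * z p ^ (k-1) * d p ^ (k-1) = A * (d p * z p) ^ (k-1) := by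
          rw [mul_pow]; ring
      _ ≤ z q ^ (k-1) * (avg2 n k E p * d p ^ (k-1)) := h1
      _ = avg2 n k E p * z q ^ (k-1) * d p ^ (k-1) := by ring
  -- case z q = 0
  by_cases hzq0 : z q = 0
  · have h1 : A * z p ^ (k-1) ≤ 0 := by
      refine (ineq1.trans (le_of_eq ?_))
      rw [hzq0, zero_pow (by omega : k - 1 ≠ 0), mul_zero]
    have hzpk : (0:ℝ) < z p ^ (k-1) := pow_pos hzp _
    have hA0 : A = 0 := le_antisymm (by nlinarith [norm_nonneg (ρ - (hDeg n E p : ℂ))])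
      (norm_nonneg _)
    have hρ : ρ = (hDeg n E p : ℂ) := by
      have := norm_eq_zero.1 hA0
      linear_combination this
    rw [hρ]
    simp only [Complex.norm_natCast]
    have : (hDeg n E p : ℝ) ≤ (Δ : ℝ) := hdΔ p
    linarith [hBnn]
  · have hzq : 0 < z q := lt_of_le_of_ne (hznn q) (Ne.symm hzq0)
    have ineq2 : C * z q ≤ avg2 n k E q * z p := by
      have h1 := (habs q).trans hboundQ
      have hdq : (0:ℝ) < d q ^ (k-1) := pow_pos (hd q) _
      have hzq2 : (0:ℝ) < z q ^ (k-2) := pow_pos hzq _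
      rw [← mul_le_mul_iff_of_pos_right hdq, ← mul_le_mul_iff_of_pos_right hzq2]
      calc C * z q * d q ^ (k-1) * z q ^ (k-2) = C * (d q * z q) ^ (k-1) := by
            rw [mul_pow, show k - 1 = (k-2) + 1 by omega, pow_succ (z q)]
            ring
        _ ≤ (z p * z q ^ (k-2)) * (avg2 n k E q * d q ^ (k-1)) := h1
        _ = avg2 n k E q * z p * d q ^ (k-1) * z q ^ (k-2) := by ring
    have hAnn : 0 ≤ A := norm_nonneg _
    have hCnn : 0 ≤ C := norm_nonneg _
    have hfinal : min A C ≤ B := by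
      by_cases hcase : avg2 n k E p ≤ M₂
      · -- easy case : A ≤ avg2 p ≤ M₂ ≤ B
        have h1 : A * z p ^ (k-1) ≤ avg2 n k E p * z p ^ (k-1) := by
          refine ineq1.trans ?_
          exact mul_le_mul_of_nonneg_left
            (pow_le_pow_left₀ (hznn q) hzqp _) (avg2_nonneg n k E p)
        have h2 : A ≤ avg2 n k E p :=
          le_of_mul_le_mul_right (by linarith) (pow_pos hzp (k-1))
        exact le_trans (min_le_left _ _) (h2.trans (hcase.trans hM₂B))
      · -- hard case : p = i0, so q ≥ i1
        push_neg at hcase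
        have hpi0 : p = i0 := by
          by_contra hne0
          have hpv : p.val ≠ 0 := fun h => hne0 (by rw [hi0]; exact Fin.ext h)
          have : i1 ≤ p := by
            rw [hi1, Fin.le_def]
            show 1 ≤ p.val
            omega
          exact absurd (hsort i1 p this) (by rw [← hM₂] at *; linarith)
        have hqv : q.val ≠ 0 := fun h => hpq (by rw [hpi0, hi0]; exact Fin.ext h)
        have hqi1 : i1 ≤ q := by
          rw [hi1, Fin.le_def]
          show 1 ≤ q.val
          omega
        have hmq : avg2 n k E q ≤ M₂ := hsort i1 q hqi1
        have hmp : avg2 n k E p ≤ M₁ := hsort i0 p (by rw [hi0, Fin.le_def]; show 0 ≤ p.val; omega)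
        -- combine
        have h2 : C ^ (k-1) * z q ^ (k-1) ≤ (avg2 n k E q) ^ (k-1) * z p ^ (k-1) := by
          calc C ^ (k-1) * z q ^ (k-1) = (C * z q) ^ (k-1) := by rw [mul_pow]
            _ ≤ (avg2 n k E q * z p) ^ (k-1) :=
                pow_le_pow_left₀ (by positivity) ineq2 _
            _ = (avg2 n k E q) ^ (k-1) * z p ^ (k-1) := by rw [mul_pow]
        have h3 : A * C ^ (k-1) ≤ avg2 n k E p * (avg2 n k E q) ^ (k-1) := by
          have hzpk : (0:ℝ) < z p ^ (k-1) := pow_pos hzp _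
          have hzqk : (0:ℝ) < z q ^ (k-1) := pow_pos hzq _
          rw [← mul_le_mul_iff_of_pos_right (mul_pos hzpk hzqk)]
          calc A * C ^ (k-1) * (z p ^ (k-1) * z q ^ (k-1))
              = (A * z p ^ (k-1)) * (C ^ (k-1) * z q ^ (k-1)) := by ring
            _ ≤ (avg2 n k E p * z q ^ (k-1)) * ((avg2 n k E q) ^ (k-1) * z p ^ (k-1)) := by
                exact mul_le_mul ineq1 h2
                  (mul_nonneg (pow_nonneg hCnn _) (pow_nonneg (hznn q) _))
                  (mul_nonneg (avg2_nonneg n k E p) (pow_nonneg (hznn q) _))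
            _ = avg2 n k E p * (avg2 n k E q) ^ (k-1) * (z p ^ (k-1) * z q ^ (k-1)) := by
                ring
        have h4 : A * C ^ (k-1) ≤ M₁ * M₂ ^ (k-1) := by
          refine h3.trans ?_
          exact mul_le_mul hmp (pow_le_pow_left₀ (avg2_nonneg n k E q) hmq _)
            (pow_nonneg (avg2_nonneg n k E q) _) (by linarith)
        have h5 : (min A C) ^ k ≤ M₁ * M₂ ^ (k-1) := by
          refine le_trans ?_ h4
          calc (min A C) ^ k = min A C * (min A C) ^ (k-1) := by
                rw [← pow_succ']
                congr 1
                omega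
            _ ≤ A * C ^ (k-1) := by
                apply mul_le_mul (min_le_left _ _)
                  (pow_le_pow_left₀ (le_min hAnn hCnn) (min_le_right _ _) _)
                  (by positivity) hAnn
        have hmin_nn : 0 ≤ min A C := le_min hAnn hCnn
        have h6 : min A C ≤ (M₁ * M₂ ^ (k-1)) ^ ((1:ℝ)/k) := by
          have := Real.rpow_le_rpow (by positivity) h5 (by positivity : (0:ℝ) ≤ (1:ℝ)/k)
          rwa [one_div, Real.pow_rpow_inv_natCast hmin_nn (by omega), ← one_div] at this
        rwa [hBeq] at h6
    -- conclude
    rcases min_cases A C with ⟨hmin, -⟩ | ⟨hmin, -⟩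
    · have : ‖ρ‖ ≤ A + d p := by
        calc ‖ρ‖ = ‖(ρ - (hDeg n E p : ℂ)) + (hDeg n E p : ℂ)‖ := by
              ring_nf
          _ ≤ A + ‖(hDeg n E p : ℂ)‖ := norm_add_le _ _
          _ = A + d p := by rw [Complex.norm_natCast]
      rw [hmin] at hfinal
      linarith [hdΔ p]
    · have : ‖ρ‖ ≤ C + d q := by
        calc ‖ρ‖ = ‖(ρ - (hDeg n E q : ℂ)) + (hDeg n E q : ℂ)‖ := by
              ring_nf
          _ ≤ C + ‖(hDeg n E q : ℂ)‖ := norm_add_le _ _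
          _ = C + d q := by rw [Complex.norm_natCast]
      rw [hmin] at hfinal
      linarith [hdΔ q]
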